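/- Let n ≥ 1 and let μ be the uniform (rotation-invariant) probability measure on the unit sphere in EuclideanSpace ℝ (Fin (4n)). For x on the sphere let q_i(x) ∈ ℍ be the quaternion formed from the i-th block of four coordinates of x, let the edges be e_i(x) = 2·Hopf(q_i(x)), let the n+1 vertices be v_0(x) = 0 and v_m(x) = ∑_{i=0}^{m-1} e_i(x) for 1 ≤ m ≤ n, and let Gyradius(x) = (1/(2(n+1)²)) · ∑_{i=0}^{n} ∑_{j=0}^{n} ‖v_i(x) − v_j(x)‖². Then ∫ Gyradius(x) dμ(x) = 2(n+2)/((n+1)(2n+1)), that is, E(Gyradius, Arm₃(n)) = (n+2)/((n+1)(n + 1/2)). -/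

import Mathlib

open scoped Quaternion
open MeasureTheory Real

/-- The quaternion unit 𝐢. -/
noncomputable def qI : ℍ[ℝ] := ⟨0, 1, 0, 0⟩

/-- The Hopf map `q ↦ q̄ · 𝐢 · q`. -/
noncomputable def Hopf (q : ℍ[ℝ]) : ℍ[ℝ] := star q * qI * q

/-- The quaternion formed from the `i`-th block of four coordinates of `x ∈ ℝ^{4n}`. -/
noncomputable def blockQuat (n : ℕ) (i : Fin n) (x : EuclideanSpace ℝ (Fin (4 * n))) : ℍ[ℝ] :=
  ⟨x ⟨4 * i, by have := i.isLt; omega⟩, x ⟨4 * i + 1, by have := i.isLt; omega⟩,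
   x ⟨4 * i + 2, by have := i.isLt; omega⟩, x ⟨4 * i + 3, by have := i.isLt; omega⟩⟩

/-- The `m`-th vertex (partial sum of edges, starting at the origin) of the spatial arm
determined by `√2·x`, whose edges are `eᵢ(x) = 2·Hopf(qᵢ(x))`. -/
noncomputable def armVertex (n : ℕ) (m : Fin (n + 1)) (x : EuclideanSpace ℝ (Fin (4 * n))) :
    ℍ[ℝ] :=
  ∑ i : Fin n, if (i : ℕ) < (m : ℕ) then (2 : ℝ) • Hopf (blockQuat n i x) else 0


private lemma s2 : Real.sqrt 2 * Real.sqrt 2 = 2 := Real.mul_self_sqrt (by norm_num)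
private lemma s2' : Real.sqrt 2 ^ 2 = 2 := Real.sq_sqrt (by norm_num)

section prelim
variable {d : ℕ}

lemma contCoord (j : Fin d) : Continuous fun x : EuclideanSpace ℝ (Fin d) => x j :=
  (continuous_apply j).comp (PiLp.continuous_ofLp (p := 2) (β := fun _ : Fin d => ℝ))

noncomputable def signedPerm (σ : Equiv.Perm (Fin d)) (s : Fin d → ℝ)
    (hs : ∀ j, s j * s j = 1) :
    EuclideanSpace ℝ (Fin d) ≃ₗᵢ[ℝ] EuclideanSpace ℝ (Fin d) where
  toLinearEquiv :=
  { toFun := fun x => WithLp.toLp 2 (fun j => s j * x (σ j))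
    invFun := fun y => WithLp.toLp 2 (fun j => s (σ.symm j) * y (σ.symm j))
    map_add' := fun x y => by ext j; simp [mul_add]
    map_smul' := fun c x => by ext j; simp [smul_eq_mul]; ring
    left_inv := fun x => by
      ext j
      show s _ * (s _ * x (σ (σ.symm j))) = x j
      rw [← mul_assoc, hs, one_mul, Equiv.apply_symm_apply]
    right_inv := fun y => by
      ext j
      show s j * (s _ * y (σ.symm (σ j))) = y j
      rw [Equiv.symm_apply_apply, ← mul_assoc, hs, one_mul] }
  norm_map' := fun x => by
    simp only [EuclideanSpace.norm_eq]
    congr 1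
    have key : ∀ j : Fin d, ‖s j * x (σ j)‖ ^ 2 = ‖x (σ j)‖ ^ 2 := by
      intro j
      have h1 : ‖s j‖ ^ 2 = 1 := by rw [sq, ← norm_mul, hs, norm_one]
      rw [norm_mul, mul_pow, h1, one_mul]
    calc ∑ j : Fin d, ‖s j * x (σ j)‖ ^ 2 = ∑ j : Fin d, ‖x (σ j)‖ ^ 2 :=
          Finset.sum_congr rfl fun j _ => key j
      _ = ∑ j : Fin d, ‖x j‖ ^ 2 := Equiv.sum_comp σ fun j => ‖x j‖ ^ 2

lemma signedPerm_apply (σ : Equiv.Perm (Fin d)) (s : Fin d → ℝ)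
    (hs : ∀ j, s j * s j = 1) (x : EuclideanSpace ℝ (Fin d)) (j : Fin d) :
    signedPerm σ s hs x j = s j * x (σ j) := rfl

/-- permutation isometry -/
noncomputable def permIso (σ : Equiv.Perm (Fin d)) :
    EuclideanSpace ℝ (Fin d) ≃ₗᵢ[ℝ] EuclideanSpace ℝ (Fin d) :=
  signedPerm σ (fun _ => 1) (fun _ => one_mul 1)

lemma permIso_apply (σ : Equiv.Perm (Fin d)) (x : EuclideanSpace ℝ (Fin d)) (j : Fin d) :
    permIso σ x j = x (σ j) := one_mul _

/-- sign-flip isometry on a set of coordinates -/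
noncomputable def flipIso (S : Finset (Fin d)) :
    EuclideanSpace ℝ (Fin d) ≃ₗᵢ[ℝ] EuclideanSpace ℝ (Fin d) :=
  signedPerm (Equiv.refl _) (fun j => if j ∈ S then -1 else 1)
    (fun j => by by_cases h : j ∈ S <;> simp [h])

lemma flipIso_apply_mem {S : Finset (Fin d)} {j : Fin d} (h : j ∈ S)
    (x : EuclideanSpace ℝ (Fin d)) : flipIso S x j = -x j := by
  show (if j ∈ S then (-1:ℝ) else 1) * x j = -x j
  rw [if_pos h]; ring

lemma flipIso_apply_not_mem {S : Finset (Fin d)} {j : Fin d} (h : j ∉ S)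
    (x : EuclideanSpace ℝ (Fin d)) : flipIso S x j = x j := by
  show (if j ∈ S then (-1:ℝ) else 1) * x j = x j
  rw [if_neg h]; ring

noncomputable def rotFun (p q : Fin d) (x : EuclideanSpace ℝ (Fin d)) :
    EuclideanSpace ℝ (Fin d) := WithLp.toLp 2 (fun j =>
  if j = p then (x p + x q) / Real.sqrt 2
  else if j = q then (x p - x q) / Real.sqrt 2 else x j)

lemma rotFun_p (p q : Fin d) (x : EuclideanSpace ℝ (Fin d)) :
    rotFun p q x p = (x p + x q) / Real.sqrt 2 := if_pos rfl

lemma rotFun_q {p q : Fin d} (hpq : p ≠ q) (x : EuclideanSpace ℝ (Fin d)) :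
    rotFun p q x q = (x p - x q) / Real.sqrt 2 := by
  rw [rotFun, PiLp.toLp_apply, if_neg hpq.symm, if_pos rfl]

lemma rotFun_other {p q j : Fin d} (hjp : j ≠ p) (hjq : j ≠ q)
    (x : EuclideanSpace ℝ (Fin d)) : rotFun p q x j = x j := by
  rw [rotFun, PiLp.toLp_apply, if_neg hjp, if_neg hjq]

lemma rotFun_invol {p q : Fin d} (hpq : p ≠ q) (x : EuclideanSpace ℝ (Fin d)) :
    rotFun p q (rotFun p q x) = x := by
  ext j
  by_cases hjp : j = p
  · subst hjp
    rw [rotFun_p, rotFun_p, rotFun_q hpq, ← add_div, div_div, s2]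
    ring
  · by_cases hjq : j = q
    · subst hjq
      rw [rotFun_q hpq, rotFun_p, rotFun_q hpq, div_sub_div_same, div_div, s2]
      ring
    · rw [rotFun_other hjp hjq, rotFun_other hjp hjq]

noncomputable def rot45 (p q : Fin d) (hpq : p ≠ q) :
    EuclideanSpace ℝ (Fin d) ≃ₗᵢ[ℝ] EuclideanSpace ℝ (Fin d) where
  toLinearEquiv :=
  { toFun := rotFun p q
    invFun := rotFun p q
    map_add' := fun x y => by
      ext j
      show rotFun p q (x + y) j = rotFun p q x j + rotFun p q y j
      simp only [rotFun, PiLp.add_apply, PiLp.toLp_apply]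
      split_ifs <;> ring
    map_smul' := fun c x => by
      ext j
      show rotFun p q (c • x) j = c • rotFun p q x j
      simp only [rotFun, PiLp.smul_apply, smul_eq_mul, PiLp.toLp_apply]
      split_ifs <;> ring
    left_inv := rotFun_invol hpq
    right_inv := rotFun_invol hpq }
  norm_map' := fun x => by
    show ‖rotFun p q x‖ = ‖x‖
    simp only [EuclideanSpace.norm_eq]
    congr 1
    have hnorm : ∀ y : EuclideanSpace ℝ (Fin d), ∀ j, ‖y j‖ ^ 2 = (y j) ^ 2 := fun y j => by
      rw [Real.norm_eq_abs, sq_abs]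
    rw [Finset.sum_congr rfl fun j _ => hnorm (rotFun p q x) j,
        Finset.sum_congr rfl fun j _ => hnorm x j]
    have hq : q ∈ Finset.univ.erase p := Finset.mem_erase.2 ⟨hpq.symm, Finset.mem_univ q⟩
    rw [← Finset.add_sum_erase _ _ (Finset.mem_univ p), ← Finset.add_sum_erase _ _ hq,
        ← Finset.add_sum_erase _ (fun j => x j ^ 2) (Finset.mem_univ p),
        ← Finset.add_sum_erase _ (fun j => x j ^ 2) hq]
    have hrest : ∀ j ∈ (Finset.univ.erase p).erase q, rotFun p q x j ^ 2 = x j ^ 2 := by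
      intro j hj
      have hj1 := Finset.mem_erase.1 hj
      have hj2 := Finset.mem_erase.1 hj1.2
      rw [rotFun_other hj2.1 hj1.1]
    rw [Finset.sum_congr rfl hrest, rotFun_p, rotFun_q hpq, div_pow, div_pow, s2']
    ring

lemma rot45_apply_p (p q : Fin d) (hpq : p ≠ q) (x : EuclideanSpace ℝ (Fin d)) :
    rot45 p q hpq x p = (x p + x q) / Real.sqrt 2 := rotFun_p p q x

end prelim

section moments
variable {d : ℕ} {μ : Measure (EuclideanSpace ℝ (Fin d))} [IsProbabilityMeasure μ]

lemma ae_sphere (hsphere : μ (Metric.sphere (0 : EuclideanSpace ℝ (Fin d)) 1) = 1) :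
    ∀ᵐ x ∂μ, ‖x‖ = 1 := by
  have hms : MeasurableSet (Metric.sphere (0 : EuclideanSpace ℝ (Fin d)) 1) :=
    Metric.isClosed_sphere.measurableSet
  have hc : μ (Metric.sphere (0 : EuclideanSpace ℝ (Fin d)) 1)ᶜ = 0 := by
    rw [measure_compl hms (measure_ne_top μ _), hsphere, measure_univ, tsub_self]
  refine (ae_iff.2 ?_)
  convert hc using 2
  ext x
  simp [mem_sphere_zero_iff_norm]

lemma integrable_cont (hsphere : μ (Metric.sphere (0 : EuclideanSpace ℝ (Fin d)) 1) = 1)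
    (f : EuclideanSpace ℝ (Fin d) → ℝ) (hf : Continuous f) :
    Integrable f μ := by
  obtain ⟨C, hC⟩ := (isCompact_sphere (0 : EuclideanSpace ℝ (Fin d)) 1).exists_bound_of_continuousOn
    hf.continuousOn
  refine Integrable.mono' (integrable_const C) hf.aestronglyMeasurable ?_
  filter_upwards [ae_sphere hsphere] with x hx
  exact hC x (by simp [mem_sphere_zero_iff_norm, hx])

variable (hinv : ∀ O : EuclideanSpace ℝ (Fin d) ≃ₗᵢ[ℝ] EuclideanSpace ℝ (Fin d),
      Measure.map (fun x => O x) μ = μ)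

include hinv

omit [IsProbabilityMeasure μ] in
lemma integral_comp_iso (O : EuclideanSpace ℝ (Fin d) ≃ₗᵢ[ℝ] EuclideanSpace ℝ (Fin d))
    (f : EuclideanSpace ℝ (Fin d) → ℝ) (hf : Continuous f) :
    ∫ x, f (O x) ∂μ = ∫ x, f x ∂μ := by
  conv_rhs => rw [← hinv O]
  rw [integral_map (O.continuous.measurable.aemeasurable)
    hf.aestronglyMeasurable.aemeasurable.aestronglyMeasurable]

omit [IsProbabilityMeasure μ] in
lemma integral_zero_of_neg (O : EuclideanSpace ℝ (Fin d) ≃ₗᵢ[ℝ] EuclideanSpace ℝ (Fin d))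
    (f : EuclideanSpace ℝ (Fin d) → ℝ) (hf : Continuous f)
    (h : ∀ x, f (O x) = -f x) : ∫ x, f x ∂μ = 0 := by
  have h1 := integral_comp_iso hinv O f hf
  have h2 : ∫ x, f (O x) ∂μ = ∫ x, -f x ∂μ := by
    congr 1; funext x; exact h x
  rw [h2, integral_neg] at h1
  linarith

omit [IsProbabilityMeasure μ] in
lemma m4_eq (p q : Fin d) :
    ∫ x, (x p) ^ 4 ∂μ = ∫ x, (x q) ^ 4 ∂μ := by
  have := integral_comp_iso hinv (permIso (Equiv.swap q p))
    (fun x => (x q) ^ 4) ((contCoord q).pow 4)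
  have heq : ∀ x : EuclideanSpace ℝ (Fin d),
      (permIso (Equiv.swap q p) x q) ^ 4 = (x p) ^ 4 := by
    intro x
    rw [permIso_apply, Equiv.swap_apply_left]
  calc ∫ x, (x p) ^ 4 ∂μ = ∫ x, (permIso (Equiv.swap q p) x q) ^ 4 ∂μ := by
        congr 1; funext x; rw [heq x]
    _ = ∫ x, (x q) ^ 4 ∂μ := this

omit [IsProbabilityMeasure μ] in
lemma m22_eq (p q p' q' : Fin d) (hpq : p ≠ q) (hpq' : p' ≠ q') :
    ∫ x, (x p) ^ 2 * (x q) ^ 2 ∂μ = ∫ x, (x p') ^ 2 * (x q') ^ 2 ∂μ := by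
  set τ := Equiv.swap p' p with hτ
  set w := τ q with hw
  set σ := (Equiv.swap q' w).trans τ with hσ
  have hp'w : p' ≠ w := by
    intro hcon
    apply hpq
    have : τ p' = τ w := by rw [hcon]
    rw [Equiv.swap_apply_left] at this
    rw [hw, Equiv.swap_apply_self] at this
    exact this
  have hσp : σ p' = p := by
    rw [hσ]
    simp only [Equiv.trans_apply]
    rw [Equiv.swap_apply_of_ne_of_ne hpq' hp'w, Equiv.swap_apply_left]
  have hσq : σ q' = q := by
    rw [hσ]
    simp only [Equiv.trans_apply]
    rw [Equiv.swap_apply_left, hw, Equiv.swap_apply_self]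
  have := integral_comp_iso hinv (permIso σ)
    (fun x => (x p') ^ 2 * (x q') ^ 2) (((contCoord p').pow 2).mul ((contCoord q').pow 2))
  calc ∫ x, (x p) ^ 2 * (x q) ^ 2 ∂μ
      = ∫ x, (permIso σ x p') ^ 2 * (permIso σ x q') ^ 2 ∂μ := by
        congr 1; funext x; rw [permIso_apply, permIso_apply, hσp, hσq]
    _ = ∫ x, (x p') ^ 2 * (x q') ^ 2 ∂μ := this

omit [IsProbabilityMeasure μ] in
lemma odd31 (p q : Fin d) (hpq : p ≠ q) : ∫ x, (x p) ^ 3 * (x q) ∂μ = 0 := by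
  refine integral_zero_of_neg hinv (flipIso {q}) _
    (((contCoord p).pow 3).mul (contCoord q)) (fun x => ?_)
  rw [flipIso_apply_not_mem (by simp [hpq]), flipIso_apply_mem (Finset.mem_singleton_self q)]
  ring

omit [IsProbabilityMeasure μ] in
lemma odd13 (p q : Fin d) (hpq : p ≠ q) : ∫ x, (x p) * (x q) ^ 3 ∂μ = 0 := by
  refine integral_zero_of_neg hinv (flipIso {q}) _
    ((contCoord p).mul ((contCoord q).pow 3)) (fun x => ?_)
  rw [flipIso_apply_not_mem (by simp [hpq]), flipIso_apply_mem (Finset.mem_singleton_self q)]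
  ring

lemma a3b (hsphere : μ (Metric.sphere (0 : EuclideanSpace ℝ (Fin d)) 1) = 1)
    (p q : Fin d) (hpq : p ≠ q) :
    ∫ x, (x p) ^ 4 ∂μ = 3 * ∫ x, (x p) ^ 2 * (x q) ^ 2 ∂μ := by
  have hs4 : (Real.sqrt 2) ^ 4 = 4 := by
    rw [show (4:ℕ) = 2 * 2 from rfl, pow_mul, s2']; norm_num
  have h0 : ∫ x, (x p) ^ 4 ∂μ = ∫ x, ((x p + x q) / Real.sqrt 2) ^ 4 ∂μ := by
    have := integral_comp_iso hinv (rot45 p q hpq) (fun x => (x p) ^ 4) ((contCoord p).pow 4)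
    rw [← this]
    congr 1; funext x
    show (rot45 p q hpq x p) ^ 4 = _
    rw [rot45_apply_p p q hpq x]
  have expand : ∀ x : EuclideanSpace ℝ (Fin d),
      ((x p + x q) / Real.sqrt 2) ^ 4
        = (1/4) * (x p) ^ 4 + (x p) ^ 3 * (x q) + (3/2) * ((x p) ^ 2 * (x q) ^ 2)
          + (x p) * (x q) ^ 3 + (1/4) * (x q) ^ 4 := by
    intro x
    rw [div_pow, hs4]
    ring
  have hA : Integrable (fun x : EuclideanSpace ℝ (Fin d) => (1/4) * (x p) ^ 4) μ :=
    integrable_cont hsphere _ (continuous_const.mul ((contCoord p).pow 4))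
  have hB : Integrable (fun x : EuclideanSpace ℝ (Fin d) => (x p) ^ 3 * (x q)) μ :=
    integrable_cont hsphere _ (((contCoord p).pow 3).mul (contCoord q))
  have hC : Integrable (fun x : EuclideanSpace ℝ (Fin d) => (3/2) * ((x p) ^ 2 * (x q) ^ 2)) μ :=
    integrable_cont hsphere _ (continuous_const.mul (((contCoord p).pow 2).mul ((contCoord q).pow 2)))
  have hD : Integrable (fun x : EuclideanSpace ℝ (Fin d) => (x p) * (x q) ^ 3) μ :=
    integrable_cont hsphere _ ((contCoord p).mul ((contCoord q).pow 3))
  have hE : Integrable (fun x : EuclideanSpace ℝ (Fin d) => (1/4) * (x q) ^ 4) μ :=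
    integrable_cont hsphere _ (continuous_const.mul ((contCoord q).pow 4))
  have h1 : ∫ x, ((x p + x q) / Real.sqrt 2) ^ 4 ∂μ
      = (1/4) * (∫ x, (x p) ^ 4 ∂μ) + (∫ x, (x p) ^ 3 * (x q) ∂μ)
        + (3/2) * (∫ x, (x p) ^ 2 * (x q) ^ 2 ∂μ) + (∫ x, (x p) * (x q) ^ 3 ∂μ)
        + (1/4) * (∫ x, (x q) ^ 4 ∂μ) := by
    calc ∫ x, ((x p + x q) / Real.sqrt 2) ^ 4 ∂μ
        = ∫ x, ((1/4) * (x p) ^ 4 + (x p) ^ 3 * (x q) + (3/2) * ((x p) ^ 2 * (x q) ^ 2)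
            + (x p) * (x q) ^ 3 + (1/4) * (x q) ^ 4) ∂μ := by
          congr 1; funext x; exact expand x
      _ = (∫ x, ((1/4) * (x p) ^ 4 + (x p) ^ 3 * (x q) + (3/2) * ((x p) ^ 2 * (x q) ^ 2)
            + (x p) * (x q) ^ 3) ∂μ) + ∫ x, (1/4) * (x q) ^ 4 ∂μ :=
          integral_add (((hA.add hB).add hC).add hD) hE
      _ = ((∫ x, ((1/4) * (x p) ^ 4 + (x p) ^ 3 * (x q)
            + (3/2) * ((x p) ^ 2 * (x q) ^ 2)) ∂μ) + ∫ x, (x p) * (x q) ^ 3 ∂μ)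
            + ∫ x, (1/4) * (x q) ^ 4 ∂μ := by
          exact congrArg (fun t => t + ∫ x, (1/4) * (x q) ^ 4 ∂μ)
            (integral_add ((hA.add hB).add hC) hD)

      _ = (((∫ x, ((1/4) * (x p) ^ 4 + (x p) ^ 3 * (x q)) ∂μ)
            + ∫ x, (3/2) * ((x p) ^ 2 * (x q) ^ 2) ∂μ) + ∫ x, (x p) * (x q) ^ 3 ∂μ)
            + ∫ x, (1/4) * (x q) ^ 4 ∂μ := by
          exact congrArg (fun t => t + ∫ x, (x p) * (x q) ^ 3 ∂μ + ∫ x, (1/4) * (x q) ^ 4 ∂μ)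
            (integral_add (hA.add hB) hC)
      _ = ((((∫ x, (1/4) * (x p) ^ 4 ∂μ) + ∫ x, (x p) ^ 3 * (x q) ∂μ)
            + ∫ x, (3/2) * ((x p) ^ 2 * (x q) ^ 2) ∂μ) + ∫ x, (x p) * (x q) ^ 3 ∂μ)
            + ∫ x, (1/4) * (x q) ^ 4 ∂μ := by
          exact congrArg (fun t => t + ∫ x, (3/2) * ((x p) ^ 2 * (x q) ^ 2) ∂μ
              + ∫ x, (x p) * (x q) ^ 3 ∂μ + ∫ x, (1/4) * (x q) ^ 4 ∂μ)
            (integral_add hA hB)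
      _ = _ := by
          rw [integral_const_mul, integral_const_mul, integral_const_mul]
  have o1 := odd31 hinv p q hpq
  have o2 := odd13 hinv p q hpq
  have m4 := m4_eq hinv q p
  linarith [h0, h1, o1, o2, m4]

omit [IsProbabilityMeasure μ] hinv in
lemma sum_sq_one_of_sphere (x : EuclideanSpace ℝ (Fin d)) (hx : ‖x‖ = 1) :
    ∑ j : Fin d, (x j) ^ 2 = 1 := by
  have := EuclideanSpace.norm_eq x
  rw [hx] at this
  have h2 : ∑ j : Fin d, ‖x j‖ ^ 2 = 1 := (Real.sqrt_eq_one.1 this.symm)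
  calc ∑ j : Fin d, (x j) ^ 2 = ∑ j : Fin d, ‖x j‖ ^ 2 :=
        Finset.sum_congr rfl fun j _ => by rw [Real.norm_eq_abs, sq_abs]
    _ = 1 := h2

omit hinv in
lemma sum_moments (hsphere : μ (Metric.sphere (0 : EuclideanSpace ℝ (Fin d)) 1) = 1) :
    ∑ j : Fin d, ∑ j' : Fin d, ∫ x, (x j) ^ 2 * (x j') ^ 2 ∂μ = 1 := by
  have h1 : ∫ x, (∑ j : Fin d, (x j) ^ 2) ^ 2 ∂μ = 1 := by
    have hae : (fun x : EuclideanSpace ℝ (Fin d) => (∑ j : Fin d, (x j) ^ 2) ^ 2)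
        =ᵐ[μ] fun _ => (1:ℝ) := by
      filter_upwards [ae_sphere hsphere] with x hx
      rw [sum_sq_one_of_sphere x hx]; norm_num
    rw [integral_congr_ae hae, integral_const, probReal_univ]
    simp
  have h2 : ∫ x, (∑ j : Fin d, (x j) ^ 2) ^ 2 ∂μ
      = ∑ j : Fin d, ∑ j' : Fin d, ∫ x, (x j) ^ 2 * (x j') ^ 2 ∂μ := by
    calc ∫ x, (∑ j : Fin d, (x j) ^ 2) ^ 2 ∂μ
        = ∫ x, ∑ j : Fin d, ∑ j' : Fin d, (x j) ^ 2 * (x j') ^ 2 ∂μ := by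
          congr 1; funext x
          rw [sq, Finset.sum_mul_sum]
      _ = ∑ j : Fin d, ∫ x, ∑ j' : Fin d, (x j) ^ 2 * (x j') ^ 2 ∂μ := by
          refine integral_finset_sum _ (fun j _ => ?_)
          exact integrable_cont hsphere _
            (continuous_finset_sum _ fun j' _ =>
              ((contCoord j).pow 2).mul ((contCoord j').pow 2))
      _ = ∑ j : Fin d, ∑ j' : Fin d, ∫ x, (x j) ^ 2 * (x j') ^ 2 ∂μ := by
          refine Finset.sum_congr rfl fun j _ => ?_
          refine integral_finset_sum _ (fun j' _ => ?_)
          exact integrable_cont hsphere _ (((contCoord j).pow 2).mul ((contCoord j').pow 2))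
  rw [← h2, h1]

lemma b_val (hsphere : μ (Metric.sphere (0 : EuclideanSpace ℝ (Fin d)) 1) = 1)
    (i0 i1 : Fin d) (h01 : i0 ≠ i1) :
    (d : ℝ) * ((d : ℝ) + 2) * ∫ x, (x i0) ^ 2 * (x i1) ^ 2 ∂μ = 1 := by
  set B := ∫ x, (x i0) ^ 2 * (x i1) ^ 2 ∂μ with hB
  have hterm : ∀ j j' : Fin d, ∫ x, (x j) ^ 2 * (x j') ^ 2 ∂μ
      = if j' = j then 3 * B else B := by
    intro j j'
    by_cases h : j' = j
    · subst h
      rw [if_pos rfl]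
      have h4 : ∫ x, (x j') ^ 2 * (x j') ^ 2 ∂μ = ∫ x, (x j') ^ 4 ∂μ := by
        congr 1; funext x; ring
      rw [h4, m4_eq hinv j' i0, a3b hinv hsphere i0 i1 h01]
    · rw [if_neg h]
      exact m22_eq hinv j j' i0 i1 (Ne.symm h) h01
  have := sum_moments hsphere
  rw [Finset.sum_congr rfl (fun j _ => Finset.sum_congr rfl fun j' _ => hterm j j')] at this
  have hinner : ∀ j : Fin d, ∑ j' : Fin d, (if j' = j then 3 * B else B)
      = (d : ℝ) * B + 2 * B := by
    intro j
    have : ∀ j' : Fin d, (if j' = j then 3 * B else B) = B + (if j' = j then 2 * B else 0) := by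
      intro j'; split_ifs <;> ring
    rw [Finset.sum_congr rfl fun j' _ => this j', Finset.sum_add_distrib,
        Finset.sum_ite_eq' Finset.univ j fun _ => 2 * B, if_pos (Finset.mem_univ j),
        Finset.sum_const, Finset.card_univ, Fintype.card_fin, nsmul_eq_mul]
  rw [Finset.sum_congr rfl fun j _ => hinner j, Finset.sum_const, Finset.card_univ,
      Fintype.card_fin, nsmul_eq_mul] at this
  rw [← this]
  ring

end moments

section quat
lemma qI_re : qI.re = 0 := rfl
lemma qI_imI : qI.imI = 1 := rfl
lemma qI_imJ : qI.imJ = 0 := rfl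
lemma qI_imK : qI.imK = 0 := rfl

lemma hopf_re (q : ℍ[ℝ]) : (Hopf q).re = 0 := by
  simp [Hopf, Quaternion.re_mul, Quaternion.imI_mul, Quaternion.imJ_mul, Quaternion.imK_mul,
    qI_re, qI_imI, qI_imJ, qI_imK]
  ring

lemma hopf_imI (q : ℍ[ℝ]) :
    (Hopf q).imI = q.re^2 + q.imI^2 - q.imJ^2 - q.imK^2 := by
  simp [Hopf, Quaternion.re_mul, Quaternion.imI_mul, Quaternion.imJ_mul, Quaternion.imK_mul,
    qI_re, qI_imI, qI_imJ, qI_imK]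
  ring

lemma hopf_imJ (q : ℍ[ℝ]) :
    (Hopf q).imJ = 2*(q.imI*q.imJ - q.re*q.imK) := by
  simp [Hopf, Quaternion.re_mul, Quaternion.imI_mul, Quaternion.imJ_mul, Quaternion.imK_mul,
    qI_re, qI_imI, qI_imJ, qI_imK]
  ring

lemma hopf_imK (q : ℍ[ℝ]) :
    (Hopf q).imK = 2*(q.re*q.imJ + q.imI*q.imK) := by
  simp [Hopf, Quaternion.re_mul, Quaternion.imI_mul, Quaternion.imJ_mul, Quaternion.imK_mul,
    qI_re, qI_imI, qI_imJ, qI_imK]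
  ring

lemma quat_inner (a b : ℍ[ℝ]) :
    (inner ℝ a b : ℝ) = a.re*b.re + a.imI*b.imI + a.imJ*b.imJ + a.imK*b.imK := by
  rw [Quaternion.inner_def]
  simp [Quaternion.re_mul]

def bIdx (n : ℕ) (k : Fin n) (r : Fin 4) : Fin (4*n) :=
  ⟨4*(k:ℕ)+(r:ℕ), by have := k.isLt; have := r.isLt; omega⟩

lemma bIdx_val (n : ℕ) (k : Fin n) (r : Fin 4) : (bIdx n k r : ℕ) = 4*(k:ℕ)+(r:ℕ) := rfl

lemma bq_re (n : ℕ) (k : Fin n) (x : EuclideanSpace ℝ (Fin (4*n))) :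
    (blockQuat n k x).re = x (bIdx n k 0) := rfl
lemma bq_imI (n : ℕ) (k : Fin n) (x : EuclideanSpace ℝ (Fin (4*n))) :
    (blockQuat n k x).imI = x (bIdx n k 1) := rfl
lemma bq_imJ (n : ℕ) (k : Fin n) (x : EuclideanSpace ℝ (Fin (4*n))) :
    (blockQuat n k x).imJ = x (bIdx n k 2) := rfl
lemma bq_imK (n : ℕ) (k : Fin n) (x : EuclideanSpace ℝ (Fin (4*n))) :
    (blockQuat n k x).imK = x (bIdx n k 3) := rfl

lemma cont_blockQuat (n : ℕ) (k : Fin n) : Continuous fun x => blockQuat n k x := by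
  have : (fun x => blockQuat n k x)
      = fun x : EuclideanSpace ℝ (Fin (4*n)) => Quaternion.linearIsometryEquivTuple.symm
        (WithLp.toLp 2 (fun r : Fin 4 => x (bIdx n k r)) : EuclideanSpace ℝ (Fin 4)) := by
    funext x
    rfl
  rw [this]
  exact Quaternion.linearIsometryEquivTuple.symm.continuous.comp
    ((PiLp.continuous_toLp (p := 2) (β := fun _ : Fin 4 => ℝ)).comp
      (continuous_pi fun r => contCoord (bIdx n k r)))

lemma cont_hopf_block (n : ℕ) (k : Fin n) : Continuous fun x => Hopf (blockQuat n k x) := by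
  have h : Continuous Hopf := by
    unfold Hopf
    exact (continuous_star.mul continuous_const).mul continuous_id
  exact h.comp (cont_blockQuat n k)

end quat

section main
variable {n : ℕ} {μ : Measure (EuclideanSpace ℝ (Fin (4*n)))} [IsProbabilityMeasure μ]
  (hsphere : μ (Metric.sphere (0 : EuclideanSpace ℝ (Fin (4*n))) 1) = 1)
  (hinv : ∀ O : EuclideanSpace ℝ (Fin (4*n)) ≃ₗᵢ[ℝ] EuclideanSpace ℝ (Fin (4*n)),
      Measure.map (fun x => O x) μ = μ)

include hsphere hinv

lemma hopf_inner_integral (hn : 1 ≤ n) (k l : Fin n) :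
    ∫ x, (inner ℝ (Hopf (blockQuat n k x)) (Hopf (blockQuat n l x)) : ℝ) ∂μ
      = if k = l then
          24 * ∫ x, (x (⟨0, by omega⟩ : Fin (4*n)))^2 * (x (⟨1, by omega⟩ : Fin (4*n)))^2 ∂μ
        else 0 := by
  set i00 : Fin (4*n) := ⟨0, by omega⟩ with hi00
  set i01 : Fin (4*n) := ⟨1, by omega⟩ with hi01
  have h01 : i00 ≠ i01 := Fin.ne_of_val_ne (by norm_num)
  set B : ℝ := ∫ x, (x i00)^2 * (x i01)^2 ∂μ with hBdef
  by_cases hkl : k = l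
  · subst hkl
    rw [if_pos rfl]
    have hpt : ∀ x : EuclideanSpace ℝ (Fin (4*n)),
        (inner ℝ (Hopf (blockQuat n k x)) (Hopf (blockQuat n k x)) : ℝ)
          = ∑ r : Fin 4, ∑ s : Fin 4, (x (bIdx n k r))^2 * (x (bIdx n k s))^2 := by
      intro x
      rw [quat_inner]
      simp only [hopf_re, hopf_imI, hopf_imJ, hopf_imK, bq_re, bq_imI, bq_imJ, bq_imK,
        Fin.sum_univ_four]
      ring
    have hmom : ∀ r s : Fin 4, ∫ x, (x (bIdx n k r))^2 * (x (bIdx n k s))^2 ∂μ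
        = if r = s then 3 * B else B := by
      intro r s
      by_cases hrs : r = s
      · subst hrs
        rw [if_pos rfl]
        have h4 : ∫ x, (x (bIdx n k r))^2 * (x (bIdx n k r))^2 ∂μ
            = ∫ x, (x (bIdx n k r))^4 ∂μ := by
          congr 1; funext x; ring
        rw [h4, m4_eq hinv (bIdx n k r) i00, a3b hinv hsphere i00 i01 h01]
      · rw [if_neg hrs]
        refine m22_eq hinv _ _ i00 i01 ?_ h01
        refine Fin.ne_of_val_ne ?_
        have : (r:ℕ) ≠ (s:ℕ) := Fin.val_ne_of_ne hrs
        simp only [bIdx_val]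
        omega
    calc ∫ x, (inner ℝ (Hopf (blockQuat n k x)) (Hopf (blockQuat n k x)) : ℝ) ∂μ
        = ∫ x, ∑ r : Fin 4, ∑ s : Fin 4, (x (bIdx n k r))^2 * (x (bIdx n k s))^2 ∂μ := by
          congr 1; funext x; exact hpt x
      _ = ∑ r : Fin 4, ∫ x, ∑ s : Fin 4, (x (bIdx n k r))^2 * (x (bIdx n k s))^2 ∂μ := by
          refine integral_finset_sum _ (fun r _ => ?_)
          exact integrable_cont hsphere _ (continuous_finset_sum _ fun s _ =>
            ((contCoord _).pow 2).mul ((contCoord _).pow 2))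
      _ = ∑ r : Fin 4, ∑ s : Fin 4, ∫ x, (x (bIdx n k r))^2 * (x (bIdx n k s))^2 ∂μ := by
          refine Finset.sum_congr rfl fun r _ => ?_
          refine integral_finset_sum _ (fun s _ => ?_)
          exact integrable_cont hsphere _ (((contCoord _).pow 2).mul ((contCoord _).pow 2))
      _ = ∑ r : Fin 4, ∑ s : Fin 4, (if r = s then 3 * B else B) := by
          exact Finset.sum_congr rfl fun r _ => Finset.sum_congr rfl fun s _ => hmom r s
      _ = 24 * B := by
          simp [Fin.sum_univ_four]
          norm_num
          ring
  · rw [if_neg hkl]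
    set k0 := bIdx n k 0; set k1 := bIdx n k 1; set k2 := bIdx n k 2; set k3 := bIdx n k 3
    set l0 := bIdx n l 0; set l1 := bIdx n l 1; set l2 := bIdx n l 2; set l3 := bIdx n l 3
    have hklv : (k:ℕ) ≠ (l:ℕ) := Fin.val_ne_of_ne hkl
    -- the three component product functions
    set FI : EuclideanSpace ℝ (Fin (4*n)) → ℝ := fun x =>
      ((x k0)^2 + (x k1)^2 - (x k2)^2 - (x k3)^2)
        * ((x l0)^2 + (x l1)^2 - (x l2)^2 - (x l3)^2) with hFI
    set FJ : EuclideanSpace ℝ (Fin (4*n)) → ℝ := fun x =>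
      (2*((x k1)*(x k2) - (x k0)*(x k3))) * (2*((x l1)*(x l2) - (x l0)*(x l3))) with hFJ
    set FK : EuclideanSpace ℝ (Fin (4*n)) → ℝ := fun x =>
      (2*((x k0)*(x k2) + (x k1)*(x k3))) * (2*((x l0)*(x l2) + (x l1)*(x l3))) with hFK
    have contI : Continuous FI := by
      rw [hFI]
      exact ((((contCoord k0).pow 2).add ((contCoord k1).pow 2)).sub
        ((contCoord k2).pow 2)).sub ((contCoord k3).pow 2) |>.mul
        (((((contCoord l0).pow 2).add ((contCoord l1).pow 2)).sub
        ((contCoord l2).pow 2)).sub ((contCoord l3).pow 2))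
    have contJ : Continuous FJ := by
      rw [hFJ]
      exact (continuous_const.mul (((contCoord k1).mul (contCoord k2)).sub
        ((contCoord k0).mul (contCoord k3)))).mul
        (continuous_const.mul (((contCoord l1).mul (contCoord l2)).sub
        ((contCoord l0).mul (contCoord l3))))
    have contK : Continuous FK := by
      rw [hFK]
      exact (continuous_const.mul (((contCoord k0).mul (contCoord k2)).add
        ((contCoord k1).mul (contCoord k3)))).mul
        (continuous_const.mul (((contCoord l0).mul (contCoord l2)).add
        ((contCoord l1).mul (contCoord l3))))
    have hpt : ∀ x : EuclideanSpace ℝ (Fin (4*n)),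
        (inner ℝ (Hopf (blockQuat n k x)) (Hopf (blockQuat n l x)) : ℝ) = FI x + FJ x + FK x := by
      intro x
      rw [quat_inner, hFI, hFJ, hFK]
      simp only [hopf_re, hopf_imI, hopf_imJ, hopf_imK, bq_re, bq_imI, bq_imJ, bq_imK]
      ring
    -- disequalities between coordinates
    have ne_kl : ∀ r r' : Fin 4, bIdx n k r ≠ bIdx n l r' := by
      intro r r'
      refine Fin.ne_of_val_ne ?_
      simp only [bIdx_val]
      have hr := r.isLt; have hr' := r'.isLt
      omega
    have ne_kk : ∀ r r' : Fin 4, r ≠ r' → bIdx n k r ≠ bIdx n k r' := by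
      intro r r' h
      refine Fin.ne_of_val_ne ?_
      have : (r:ℕ) ≠ (r':ℕ) := Fin.val_ne_of_ne h
      simp only [bIdx_val]
      omega
    have hJ0 : ∫ x, FJ x ∂μ = 0 := by
      refine integral_zero_of_neg hinv (flipIso {k0, k1}) FJ contJ (fun x => ?_)
      have e0 : flipIso {k0, k1} x k0 = -x k0 :=
        flipIso_apply_mem (Finset.mem_insert_self _ _) x
      have e1 : flipIso {k0, k1} x k1 = -x k1 :=
        flipIso_apply_mem (Finset.mem_insert_of_mem (Finset.mem_singleton_self _)) x
      have e2 : flipIso {k0, k1} x k2 = x k2 := by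
        refine flipIso_apply_not_mem ?_ x
        simp only [Finset.mem_insert, Finset.mem_singleton]
        push_neg
        exact ⟨ne_kk 2 0 (by decide), ne_kk 2 1 (by decide)⟩
      have e3 : flipIso {k0, k1} x k3 = x k3 := by
        refine flipIso_apply_not_mem ?_ x
        simp only [Finset.mem_insert, Finset.mem_singleton]
        push_neg
        exact ⟨ne_kk 3 0 (by decide), ne_kk 3 1 (by decide)⟩
      have el : ∀ r : Fin 4, flipIso {k0, k1} x (bIdx n l r) = x (bIdx n l r) := by
        intro r
        refine flipIso_apply_not_mem ?_ x
        simp only [Finset.mem_insert, Finset.mem_singleton]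
        push_neg
        exact ⟨(ne_kl 0 r).symm, (ne_kl 1 r).symm⟩
      rw [hFJ]
      have el0 : flipIso {k0, k1} x l0 = x l0 := el 0
      have el1 : flipIso {k0, k1} x l1 = x l1 := el 1
      have el2 : flipIso {k0, k1} x l2 = x l2 := el 2
      have el3 : flipIso {k0, k1} x l3 = x l3 := el 3
      simp only [e0, e1, e2, e3, el0, el1, el2, el3]
      ring
    have hK0 : ∫ x, FK x ∂μ = 0 := by
      refine integral_zero_of_neg hinv (flipIso {k0, k1}) FK contK (fun x => ?_)
      have e0 : flipIso {k0, k1} x k0 = -x k0 :=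
        flipIso_apply_mem (Finset.mem_insert_self _ _) x
      have e1 : flipIso {k0, k1} x k1 = -x k1 :=
        flipIso_apply_mem (Finset.mem_insert_of_mem (Finset.mem_singleton_self _)) x
      have e2 : flipIso {k0, k1} x k2 = x k2 := by
        refine flipIso_apply_not_mem ?_ x
        simp only [Finset.mem_insert, Finset.mem_singleton]
        push_neg
        exact ⟨ne_kk 2 0 (by decide), ne_kk 2 1 (by decide)⟩
      have e3 : flipIso {k0, k1} x k3 = x k3 := by
        refine flipIso_apply_not_mem ?_ x
        simp only [Finset.mem_insert, Finset.mem_singleton]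
        push_neg
        exact ⟨ne_kk 3 0 (by decide), ne_kk 3 1 (by decide)⟩
      have el : ∀ r : Fin 4, flipIso {k0, k1} x (bIdx n l r) = x (bIdx n l r) := by
        intro r
        refine flipIso_apply_not_mem ?_ x
        simp only [Finset.mem_insert, Finset.mem_singleton]
        push_neg
        exact ⟨(ne_kl 0 r).symm, (ne_kl 1 r).symm⟩
      rw [hFK]
      have el0 : flipIso {k0, k1} x l0 = x l0 := el 0
      have el1 : flipIso {k0, k1} x l1 = x l1 := el 1
      have el2 : flipIso {k0, k1} x l2 = x l2 := el 2
      have el3 : flipIso {k0, k1} x l3 = x l3 := el 3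
      simp only [e0, e1, e2, e3, el0, el1, el2, el3]
      ring
    have hI0 : ∫ x, FI x ∂μ = 0 := by
      set σ : Equiv.Perm (Fin (4*n)) := (Equiv.swap k0 k2).trans (Equiv.swap k1 k3) with hσ
      set s : Fin (4*n) → ℝ := fun j => if j = k0 ∨ j = k1 then -1 else 1 with hsdef
      have hs : ∀ j, s j * s j = 1 := by
        intro j
        rw [hsdef]
        by_cases h : j = k0 ∨ j = k1 <;> simp [h]
      refine integral_zero_of_neg hinv (signedPerm σ s hs) FI contI (fun x => ?_)
      have hσ0 : σ k0 = k2 := by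
        rw [hσ]
        simp only [Equiv.trans_apply, Equiv.swap_apply_left]
        exact Equiv.swap_apply_of_ne_of_ne (ne_kk 2 1 (by decide)) (ne_kk 2 3 (by decide))
      have hσ1 : σ k1 = k3 := by
        rw [hσ]
        simp only [Equiv.trans_apply]
        rw [Equiv.swap_apply_of_ne_of_ne (ne_kk 1 0 (by decide)) (ne_kk 1 2 (by decide)),
          Equiv.swap_apply_left]
      have hσ2 : σ k2 = k0 := by
        rw [hσ]
        simp only [Equiv.trans_apply, Equiv.swap_apply_right]
        exact Equiv.swap_apply_of_ne_of_ne (ne_kk 0 1 (by decide)) (ne_kk 0 3 (by decide))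
      have hσ3 : σ k3 = k1 := by
        rw [hσ]
        simp only [Equiv.trans_apply]
        rw [Equiv.swap_apply_of_ne_of_ne (ne_kk 3 0 (by decide)) (ne_kk 3 2 (by decide)),
          Equiv.swap_apply_right]
      have hσl : ∀ r : Fin 4, σ (bIdx n l r) = bIdx n l r := by
        intro r
        rw [hσ]
        simp only [Equiv.trans_apply]
        rw [Equiv.swap_apply_of_ne_of_ne (ne_kl 0 r).symm (ne_kl 2 r).symm,
          Equiv.swap_apply_of_ne_of_ne (ne_kl 1 r).symm (ne_kl 3 r).symm]
      have hs0 : s k0 = -1 := by rw [hsdef]; exact if_pos (Or.inl rfl)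
      have hs1 : s k1 = -1 := by rw [hsdef]; exact if_pos (Or.inr rfl)
      have hs2 : s k2 = 1 := by
        rw [hsdef]
        refine if_neg ?_
        push_neg
        exact ⟨ne_kk 2 0 (by decide), ne_kk 2 1 (by decide)⟩
      have hs3 : s k3 = 1 := by
        rw [hsdef]
        refine if_neg ?_
        push_neg
        exact ⟨ne_kk 3 0 (by decide), ne_kk 3 1 (by decide)⟩
      have hsl : ∀ r : Fin 4, s (bIdx n l r) = 1 := by
        intro r
        rw [hsdef]
        refine if_neg ?_
        push_neg
        exact ⟨(ne_kl 0 r).symm, (ne_kl 1 r).symm⟩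
      have hσl0 : σ l0 = l0 := hσl 0
      have hσl1 : σ l1 = l1 := hσl 1
      have hσl2 : σ l2 = l2 := hσl 2
      have hσl3 : σ l3 = l3 := hσl 3
      have hsl0 : s l0 = 1 := hsl 0
      have hsl1 : s l1 = 1 := hsl 1
      have hsl2 : s l2 = 1 := hsl 2
      have hsl3 : s l3 = 1 := hsl 3
      have eval : ∀ j, signedPerm σ s hs x j = s j * x (σ j) := signedPerm_apply σ s hs x
      rw [hFI]
      simp only [eval, hσ0, hσ1, hσ2, hσ3, hσl0, hσl1, hσl2, hσl3,
        hs0, hs1, hs2, hs3, hsl0, hsl1, hsl2, hsl3]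
      ring
    have hsplit : ∫ x, (inner ℝ (Hopf (blockQuat n k x)) (Hopf (blockQuat n l x)) : ℝ) ∂μ
        = (∫ x, FI x ∂μ) + (∫ x, FJ x ∂μ) + ∫ x, FK x ∂μ := by
      calc ∫ x, (inner ℝ (Hopf (blockQuat n k x)) (Hopf (blockQuat n l x)) : ℝ) ∂μ
          = ∫ x, (FI x + FJ x + FK x) ∂μ := by congr 1; funext x; exact hpt x
        _ = (∫ x, (FI x + FJ x) ∂μ) + ∫ x, FK x ∂μ :=
            integral_add ((integrable_cont hsphere FI contI).add
              (integrable_cont hsphere FJ contJ)) (integrable_cont hsphere FK contK)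
        _ = (∫ x, FI x ∂μ) + (∫ x, FJ x ∂μ) + ∫ x, FK x ∂μ := by
            rw [integral_add (integrable_cont hsphere FI contI)
              (integrable_cont hsphere FJ contJ)]
    rw [hsplit, hI0, hJ0, hK0]
    ring

end main

noncomputable def coefc (n : ℕ) (m : Fin (n+1)) (k : Fin n) : ℝ :=
  if (k:ℕ) < (m:ℕ) then 1 else 0

lemma cont_armVertex (n : ℕ) (m : Fin (n+1)) : Continuous fun x => armVertex n m x := by
  refine continuous_finset_sum _ fun k _ => ?_
  by_cases h : (k:ℕ) < (m:ℕ)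
  · simp only [if_pos h]
    exact (continuous_const : Continuous fun _ : EuclideanSpace ℝ (Fin (4*n)) => (2:ℝ)).smul
      (cont_hopf_block n k)
  · simp only [if_neg h]
    exact continuous_const

lemma coeff_sum_nat_le (N a b : ℕ) (hb : b ≤ N) (hab : a ≤ b) :
    ∑ k ∈ Finset.range N, ((if k < a then (1:ℝ) else 0) - (if k < b then 1 else 0))^2
      = (b:ℝ) - (a:ℝ) := by
  have hterm : ∀ k, ((if k < a then (1:ℝ) else 0) - (if k < b then 1 else 0))^2
      = if k ∈ Finset.Ico a b then 1 else 0 := by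
    intro k
    simp only [Finset.mem_Ico]
    split_ifs <;> first | (exfalso; omega) | norm_num
  rw [Finset.sum_congr rfl fun k _ => hterm k, Finset.sum_ite_mem,
    Finset.inter_eq_right.mpr (fun k hk => Finset.mem_range.2
      (lt_of_lt_of_le (Finset.mem_Ico.1 hk).2 hb)),
    Finset.sum_const, Nat.card_Ico, nsmul_eq_mul, mul_one]
  push_cast [hab]
  ring

lemma coeff_sum_nat (N a b : ℕ) (ha : a ≤ N) (hb : b ≤ N) :
    ∑ k ∈ Finset.range N, ((if k < a then (1:ℝ) else 0) - (if k < b then 1 else 0))^2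
      = |(a:ℝ) - (b:ℝ)| := by
  rcases le_total a b with hab | hab
  · rw [coeff_sum_nat_le N a b hb hab, abs_sub_comm,
      abs_of_nonneg (sub_nonneg.2 (by exact_mod_cast hab))]
  · have hsym : ∀ k, ((if k < a then (1:ℝ) else 0) - (if k < b then 1 else 0))^2
        = ((if k < b then (1:ℝ) else 0) - (if k < a then 1 else 0))^2 := fun k => by ring
    rw [Finset.sum_congr rfl fun k _ => hsym k, coeff_sum_nat_le N b a ha hab,
      abs_of_nonneg (sub_nonneg.2 (by exact_mod_cast hab))]

lemma coeff_sum (n : ℕ) (i j : Fin (n+1)) :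
    ∑ k : Fin n, (coefc n i k - coefc n j k)^2 = |(i:ℝ) - (j:ℝ)| := by
  have : ∀ k : Fin n, (coefc n i k - coefc n j k)^2
      = (fun m : ℕ => ((if m < (i:ℕ) then (1:ℝ) else 0) - (if m < (j:ℕ) then 1 else 0))^2) (k:ℕ) :=
    fun k => rfl
  rw [Finset.sum_congr rfl fun k _ => this k,
    Fin.sum_univ_eq_sum_range
      (fun m : ℕ => ((if m < (i:ℕ) then (1:ℝ) else 0) - (if m < (j:ℕ) then 1 else 0))^2) n]
  exact coeff_sum_nat n (i:ℕ) (j:ℕ) (Fin.is_le i) (Fin.is_le j)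

lemma gauss_sum_fin (n : ℕ) : ∑ i : Fin (n+1), (i:ℝ) = n*(n+1)/2 := by
  have h1 : ∑ i : Fin (n+1), (i:ℝ) = ∑ k ∈ Finset.range (n+1), (k:ℝ) := by
    exact Fin.sum_univ_eq_sum_range (fun k => (k:ℝ)) (n+1)
  have h2 : (∑ k ∈ Finset.range (n+1), k) * 2 = (n+1) * n := Finset.sum_range_id_mul_two (n+1)
  have h3 : ((∑ k ∈ Finset.range (n+1), k : ℕ) : ℝ) * 2 = (n+1) * n := by exact_mod_cast h2
  have h4 : ((∑ k ∈ Finset.range (n+1), k : ℕ) : ℝ) = ∑ k ∈ Finset.range (n+1), (k:ℝ) := by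
    push_cast
    rfl
  rw [h1, ← h4]
  linarith

lemma abs_sum_fin (n : ℕ) :
    ∑ i : Fin (n+1), ∑ j : Fin (n+1), |(i:ℝ) - (j:ℝ)| = n*(n+1)*(n+2)/3 := by
  induction n with
  | zero => simp
  | succ m ih =>
    have hlast : ∀ i : Fin (m+1), |((i.castSucc : Fin (m+2)):ℝ) - ((Fin.last (m+1) : Fin (m+2)):ℝ)|
        = (m+1) - (i:ℝ) := by
      intro i
      rw [Fin.coe_castSucc, Fin.val_last]
      have hle : (i:ℝ) ≤ m := by exact_mod_cast Fin.is_le i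
      rw [abs_of_nonpos (by push_cast; linarith)]
      push_cast
      ring
    have hlast' : ∀ j : Fin (m+1), |((Fin.last (m+1) : Fin (m+2)):ℝ) - ((j.castSucc : Fin (m+2)):ℝ)|
        = (m+1) - (j:ℝ) := by
      intro j
      rw [abs_sub_comm]
      exact hlast j
    have hA : ∑ i : Fin (m+1), ((m:ℝ)+1 - (i:ℝ)) = (m+1)*(m+2)/2 := by
      rw [Finset.sum_sub_distrib, Finset.sum_const, Finset.card_univ, Fintype.card_fin,
        nsmul_eq_mul, gauss_sum_fin m]
      push_cast
      ring
    rw [Fin.sum_univ_castSucc (n := m+1)]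
    rw [Finset.sum_congr rfl (fun i _ => Fin.sum_univ_castSucc
      (f := fun j : Fin (m+2) => |((i.castSucc : Fin (m+2)):ℝ) - (j:ℝ)|) )]
    rw [Fin.sum_univ_castSucc (f := fun j : Fin (m+2) => |((Fin.last (m+1) : Fin (m+2)):ℝ) - (j:ℝ)|)]
    simp only [Fin.coe_castSucc, Fin.val_last]
    have step1 : ∑ i : Fin (m+1), (∑ j : Fin (m+1), |((i:ℕ):ℝ) - ((j:ℕ):ℝ)|
        + |((i:ℕ):ℝ) - ((m+1:ℕ):ℝ)|)
        = (∑ i : Fin (m+1), ∑ j : Fin (m+1), |((i:ℕ):ℝ) - ((j:ℕ):ℝ)|)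
          + ∑ i : Fin (m+1), |((i:ℕ):ℝ) - ((m+1:ℕ):ℝ)| := Finset.sum_add_distrib
    rw [step1, ih]
    have habs : ∀ i : Fin (m+1), |((i:ℕ):ℝ) - ((m+1:ℕ):ℝ)| = (m:ℝ) + 1 - ((i:ℕ):ℝ) := by
      intro i
      have hle : ((i:ℕ):ℝ) ≤ m := by exact_mod_cast Fin.is_le i
      rw [abs_of_nonpos (by push_cast; linarith)]
      push_cast; ring
    have habs' : ∀ i : Fin (m+1), |((m+1:ℕ):ℝ) - ((i:ℕ):ℝ)| = (m:ℝ) + 1 - ((i:ℕ):ℝ) := by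
      intro i; rw [abs_sub_comm]; exact habs i
    rw [Finset.sum_congr rfl fun i _ => habs i, Finset.sum_congr rfl fun i _ => habs' i, hA,
      sub_self, abs_zero]
    push_cast
    ring

section main2
variable {n : ℕ} {μ : Measure (EuclideanSpace ℝ (Fin (4*n)))} [IsProbabilityMeasure μ]
  (hsphere : μ (Metric.sphere (0 : EuclideanSpace ℝ (Fin (4*n))) 1) = 1)
  (hinv : ∀ O : EuclideanSpace ℝ (Fin (4*n)) ≃ₗᵢ[ℝ] EuclideanSpace ℝ (Fin (4*n)),
      Measure.map (fun x => O x) μ = μ)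

include hsphere hinv

lemma vertex_integral (hn : 1 ≤ n) (i j : Fin (n+1)) :
    ∫ x, ‖armVertex n i x - armVertex n j x‖^2 ∂μ
      = 96 * (∫ x, (x (⟨0, by omega⟩ : Fin (4*n)))^2 * (x (⟨1, by omega⟩ : Fin (4*n)))^2 ∂μ)
        * |(i:ℝ) - (j:ℝ)| := by
  set B : ℝ := ∫ x, (x (⟨0, by omega⟩ : Fin (4*n)))^2 * (x (⟨1, by omega⟩ : Fin (4*n)))^2 ∂μ
    with hBdef
  have hv : ∀ (m : Fin (n+1)) (x : EuclideanSpace ℝ (Fin (4*n))),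
      armVertex n m x = ∑ k : Fin n, coefc n m k • ((2:ℝ) • Hopf (blockQuat n k x)) := by
    intro m x
    unfold armVertex coefc
    refine Finset.sum_congr rfl fun k _ => ?_
    by_cases h : (k:ℕ) < (m:ℕ)
    · rw [if_pos h, if_pos h, one_smul]
    · rw [if_neg h, if_neg h, zero_smul]
  have hdiff : ∀ x : EuclideanSpace ℝ (Fin (4*n)),
      armVertex n i x - armVertex n j x
        = ∑ k : Fin n, (coefc n i k - coefc n j k) • ((2:ℝ) • Hopf (blockQuat n k x)) := by
    intro x
    rw [hv i x, hv j x, ← Finset.sum_sub_distrib]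
    exact Finset.sum_congr rfl fun k _ => (sub_smul _ _ _).symm
  have hnorm : ∀ x : EuclideanSpace ℝ (Fin (4*n)),
      ‖armVertex n i x - armVertex n j x‖^2
        = ∑ k : Fin n, ∑ l : Fin n, (coefc n i k - coefc n j k) * ((coefc n i l - coefc n j l)
            * (2 * (2 * (inner ℝ (Hopf (blockQuat n k x)) (Hopf (blockQuat n l x)) : ℝ)))) := by
    intro x
    rw [← real_inner_self_eq_norm_sq, hdiff x, sum_inner]
    refine Finset.sum_congr rfl fun k _ => ?_
    rw [inner_sum]
    refine Finset.sum_congr rfl fun l _ => ?_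
    rw [real_inner_smul_left, real_inner_smul_right, real_inner_smul_left,
      real_inner_smul_right]
  have hint : ∀ k l : Fin n, Integrable (fun x : EuclideanSpace ℝ (Fin (4*n)) =>
      (coefc n i k - coefc n j k) * ((coefc n i l - coefc n j l)
        * (2 * (2 * (inner ℝ (Hopf (blockQuat n k x)) (Hopf (blockQuat n l x)) : ℝ))))) μ := by
    intro k l
    refine integrable_cont hsphere _ ?_
    exact continuous_const.mul (continuous_const.mul (continuous_const.mul
      (continuous_const.mul ((cont_hopf_block n k).inner (cont_hopf_block n l)))))
  calc ∫ x, ‖armVertex n i x - armVertex n j x‖^2 ∂μ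
      = ∫ x, ∑ k : Fin n, ∑ l : Fin n, (coefc n i k - coefc n j k) * ((coefc n i l - coefc n j l)
          * (2 * (2 * (inner ℝ (Hopf (blockQuat n k x)) (Hopf (blockQuat n l x)) : ℝ)))) ∂μ := by
        congr 1; funext x; exact hnorm x
    _ = ∑ k : Fin n, ∫ x, ∑ l : Fin n, (coefc n i k - coefc n j k) * ((coefc n i l - coefc n j l)
          * (2 * (2 * (inner ℝ (Hopf (blockQuat n k x)) (Hopf (blockQuat n l x)) : ℝ)))) ∂μ := by
        refine integral_finset_sum _ (fun k _ => ?_)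
        exact integrable_finset_sum _ (fun l _ => hint k l)
    _ = ∑ k : Fin n, ∑ l : Fin n, ∫ x, (coefc n i k - coefc n j k) * ((coefc n i l - coefc n j l)
          * (2 * (2 * (inner ℝ (Hopf (blockQuat n k x)) (Hopf (blockQuat n l x)) : ℝ)))) ∂μ := by
        exact Finset.sum_congr rfl fun k _ => integral_finset_sum _ (fun l _ => hint k l)
    _ = ∑ k : Fin n, ∑ l : Fin n, (coefc n i k - coefc n j k) * ((coefc n i l - coefc n j l)
          * (2 * (2 * (if k = l then 24 * B else 0)))) := by
        refine Finset.sum_congr rfl fun k _ => Finset.sum_congr rfl fun l _ => ?_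
        rw [integral_const_mul, integral_const_mul, integral_const_mul, integral_const_mul,
          hopf_inner_integral hsphere hinv hn k l]
    _ = ∑ k : Fin n, (coefc n i k - coefc n j k)^2 * (96 * B) := by
        refine Finset.sum_congr rfl fun k _ => ?_
        have hterm : ∀ l : Fin n, (coefc n i k - coefc n j k) * ((coefc n i l - coefc n j l)
            * (2 * (2 * (if k = l then 24 * B else 0))))
            = if k = l then (coefc n i l - coefc n j l)^2 * (96 * B) else 0 := by
          intro l
          by_cases h : k = l
          · subst h; rw [if_pos rfl, if_pos rfl]; ring
          · rw [if_neg h, if_neg h]; ring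
        rw [Finset.sum_congr rfl fun l _ => hterm l, Finset.sum_ite_eq]
        rw [if_pos (Finset.mem_univ k)]
    _ = 96 * B * |(i:ℝ) - (j:ℝ)| := by
        rw [← Finset.sum_mul, coeff_sum n i j]
        ring

end main2

/-- The expected radius of gyration of a random spatial arm of total length 2:
`E(Gyradius, Arm₃(n)) = (n+2)/((n+1)(n+1/2)) = 2(n+2)/((n+1)(2n+1))`.  Here `μ` is the
uniform (rotation-invariant) probability measure on the unit sphere in `ℝ^{4n}`. -/
theorem expected_gyradius_space_arm (n : ℕ) (hn : 1 ≤ n)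
    (μ : Measure (EuclideanSpace ℝ (Fin (4 * n)))) [IsProbabilityMeasure μ]
    (hsphere : μ (Metric.sphere (0 : EuclideanSpace ℝ (Fin (4 * n))) 1) = 1)
    (hinv : ∀ O : EuclideanSpace ℝ (Fin (4 * n)) ≃ₗᵢ[ℝ] EuclideanSpace ℝ (Fin (4 * n)),
      Measure.map (fun x => O x) μ = μ) :
    ∫ x, (1 / (2 * ((n : ℝ) + 1) ^ 2)) *
        ∑ i : Fin (n + 1), ∑ j : Fin (n + 1), ‖armVertex n i x - armVertex n j x‖ ^ 2 ∂μ
      = 2 * ((n : ℝ) + 2) / (((n : ℝ) + 1) * (2 * (n : ℝ) + 1)) := by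
  have hn1 : (1:ℝ) ≤ (n:ℝ) := by exact_mod_cast hn
  rw [integral_const_mul]
  have hintterm : ∀ i j : Fin (n+1),
      Integrable (fun x => ‖armVertex n i x - armVertex n j x‖^2) μ := fun i j =>
    integrable_cont hsphere _ ((((cont_armVertex n i).sub (cont_armVertex n j)).norm).pow 2)
  have hsum : ∫ x, ∑ i : Fin (n+1), ∑ j : Fin (n+1), ‖armVertex n i x - armVertex n j x‖^2 ∂μ
      = ∑ i : Fin (n+1), ∑ j : Fin (n+1), ∫ x, ‖armVertex n i x - armVertex n j x‖^2 ∂μ := by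
    rw [integral_finset_sum _ (fun i _ => integrable_finset_sum _ (fun j _ => hintterm i j))]
    exact Finset.sum_congr rfl fun i _ => integral_finset_sum _ (fun j _ => hintterm i j)
  rw [hsum]
  set B : ℝ := ∫ x, (x (⟨0, by omega⟩ : Fin (4*n)))^2 * (x (⟨1, by omega⟩ : Fin (4*n)))^2 ∂μ
    with hBdef
  have hrw : ∀ i j : Fin (n+1), ∫ x, ‖armVertex n i x - armVertex n j x‖^2 ∂μ
      = 96 * B * |(i:ℝ) - (j:ℝ)| := fun i j => vertex_integral hsphere hinv hn i j
  rw [Finset.sum_congr rfl fun i _ => Finset.sum_congr rfl fun j _ => hrw i j]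
  have hsum2 : ∑ i : Fin (n+1), ∑ j : Fin (n+1), 96 * B * |(i:ℝ) - (j:ℝ)|
      = 96 * B * ((n:ℝ)*((n:ℝ)+1)*((n:ℝ)+2)/3) := by
    rw [← abs_sum_fin n, Finset.mul_sum]
    exact Finset.sum_congr rfl fun i _ => by rw [Finset.mul_sum]
  rw [hsum2]
  have hd := b_val hinv hsphere (⟨0, by omega⟩ : Fin (4*n)) (⟨1, by omega⟩ : Fin (4*n))
    (Fin.ne_of_val_ne (by norm_num))
  have hd' : 4*(n:ℝ) * (4*(n:ℝ) + 2) * B = 1 := by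
    have : ((4*n : ℕ):ℝ) * (((4*n : ℕ):ℝ) + 2) * B = 1 := hd
    push_cast at this
    linarith
  have hnz : 4*(n:ℝ) * (4*(n:ℝ) + 2) ≠ 0 := by nlinarith
  have hBv : B = 1/(4*(n:ℝ)*(4*(n:ℝ)+2)) := by
    rw [eq_div_iff hnz]
    linarith
  rw [hBv]
  have h1 : (n:ℝ) + 1 ≠ 0 := by linarith
  have h2 : 2*(n:ℝ) + 1 ≠ 0 := by linarith
  have h3 : (n:ℝ) ≠ 0 := by linarith
  field_simp
  ring
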